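/- For α > 2, the function τ ↦ ₂F₁(−2/α, 1; 1 − 2/α; −τ) is strictly increasing on [0, ∞), equals 1 at τ = 0, and grows like C·τ^{2/α} as τ → ∞ for some constant C > 0; consequently the coverage probability Q(τ) = 1/₂F₁(−2/α,1;1−2/α;−τ) is strictly decreasing from 1 to 0. -/

import Mathlib

open MeasureTheory Real Set Filter Topology

/-- `hyp2F1 α b z` is the Gauss hypergeometric function `₂F₁(−2/α, b; 1 − 2/α; z)`
(for `α > 2`, `b > 0`, `z ≤ 0`), expressed through its integral representation. -/
noncomputable def hyp2F1 (α b z : ℝ) : ℝ :=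
  1 + 2 * ∫ u in Ioi (1 : ℝ), (1 - (1 - z * u ^ (-α)) ^ (-b)) * u

namespace Hyp2F1Aux

lemma hyp_eq (α τ : ℝ) (hτ : 0 ≤ τ) :
    hyp2F1 α 1 (-τ) = 1 + 2 * ∫ u in Ioi (1:ℝ), τ * u / (u ^ α + τ) := by
  unfold hyp2F1
  congr 2
  refine setIntegral_congr_fun measurableSet_Ioi fun u hu => ?_
  have hu1 : (1:ℝ) < u := hu
  have hu0 : (0:ℝ) < u := by linarith
  have hua : (0:ℝ) < u ^ α := Real.rpow_pos_of_pos hu0 α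
  have h1 : u ^ (-α) = (u ^ α)⁻¹ := Real.rpow_neg hu0.le α
  have hden : (0:ℝ) < u ^ α + τ := by linarith
  show (1 - (1 - -τ * u ^ (-α)) ^ (-(1:ℝ))) * u = τ * u / (u ^ α + τ)
  rw [Real.rpow_neg_one, h1]
  field_simp
  rw [sub_neg_eq_add, one_sub_div hden.ne', div_mul_cancel₀ _ hden.ne']
  ring

variable {α : ℝ} (hα : 2 < α)

include hα

lemma cont_rpow : Continuous fun u : ℝ => u ^ α :=
  Real.continuous_rpow_const (by linarith)

lemma f_contOn (τ : ℝ) (hτ : 0 ≤ τ) :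
    ContinuousOn (fun u : ℝ => τ * u / (u ^ α + τ)) (Ioi 0) := by
  refine ContinuousOn.div (Continuous.continuousOn (by continuity))
    ((cont_rpow hα).continuousOn.add continuousOn_const) ?_
  intro u hu
  have : (0:ℝ) < u ^ α := Real.rpow_pos_of_pos hu α
  positivity

lemma f_bound (τ : ℝ) (hτ : 0 ≤ τ) {u : ℝ} (hu : 1 < u) :
    τ * u / (u ^ α + τ) ≤ τ * u ^ (1 - α) := by
  have hu0 : (0:ℝ) < u := by linarith
  have hua : (0:ℝ) < u ^ α := Real.rpow_pos_of_pos hu0 α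
  have h1 : u ^ (1 - α) = u / u ^ α := by
    rw [Real.rpow_sub hu0, Real.rpow_one]
  rw [h1, mul_div_assoc']
  exact div_le_div_of_nonneg_left (by positivity) hua (by linarith)

lemma f_nonneg (τ : ℝ) (hτ : 0 ≤ τ) {u : ℝ} (hu : 0 < u) :
    0 ≤ τ * u / (u ^ α + τ) := by
  have : (0:ℝ) < u ^ α := Real.rpow_pos_of_pos hu α
  positivity

lemma f_integrable (τ : ℝ) (hτ : 0 ≤ τ) :
    IntegrableOn (fun u : ℝ => τ * u / (u ^ α + τ)) (Ioi 1) := by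
  have hbd : IntegrableOn (fun u : ℝ => τ * u ^ (1 - α)) (Ioi 1) :=
    (integrableOn_Ioi_rpow_of_lt (by linarith) one_pos).const_mul τ
  refine hbd.mono' (((f_contOn hα τ hτ).mono (fun x (hx : 1 < x) => lt_trans one_pos hx)
      ).aestronglyMeasurable measurableSet_Ioi) ?_
  filter_upwards [ae_restrict_mem measurableSet_Ioi] with u hu
  have hu1 : (1:ℝ) < u := hu
  rw [Real.norm_eq_abs, abs_of_nonneg (f_nonneg hα τ hτ (by linarith))]
  exact f_bound hα τ hτ hu1

/-- the limiting integrand -/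
noncomputable def G (α : ℝ) : ℝ → ℝ := fun v => v / (v ^ α + 1)

lemma G_contOn : ContinuousOn (G α) (Ici 0) := by
  refine ContinuousOn.div continuousOn_id
    ((cont_rpow hα).continuousOn.add continuousOn_const) ?_
  intro v hv
  have : (0:ℝ) ≤ v ^ α := Real.rpow_nonneg hv α
  positivity

lemma G_nonneg {v : ℝ} (hv : 0 ≤ v) : 0 ≤ G α v := by
  have : (0:ℝ) ≤ v ^ α := Real.rpow_nonneg hv α
  unfold G; positivity

lemma G_le {v : ℝ} (hv : 0 ≤ v) : G α v ≤ v := by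
  have h : (0:ℝ) ≤ v ^ α := Real.rpow_nonneg hv α
  unfold G
  calc v / (v ^ α + 1) ≤ v / 1 :=
        div_le_div_of_nonneg_left hv one_pos (by linarith)
    _ = v := div_one v

lemma G_integrable : IntegrableOn (G α) (Ioi 0) := by
  have h1 : IntegrableOn (G α) (Ioc 0 1) := by
    refine (((G_contOn hα).mono Icc_subset_Ici_self).integrableOn_Icc).mono_set
      Ioc_subset_Icc_self
  have h2 : IntegrableOn (G α) (Ioi 1) := by
    have hbd : IntegrableOn (fun u : ℝ => u ^ (1 - α)) (Ioi 1) :=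
      integrableOn_Ioi_rpow_of_lt (by linarith) one_pos
    refine hbd.mono' (((G_contOn hα).mono (fun x (hx : 1 < x) => le_of_lt (lt_trans one_pos hx))
        ).aestronglyMeasurable measurableSet_Ioi) ?_
    filter_upwards [ae_restrict_mem measurableSet_Ioi] with u hu
    have hu1 : (1:ℝ) < u := hu
    have hu0 : (0:ℝ) < u := by linarith
    have hua : (0:ℝ) < u ^ α := Real.rpow_pos_of_pos hu0 α
    rw [Real.norm_eq_abs, abs_of_nonneg (G_nonneg hα hu0.le)]
    have h1 : u ^ (1 - α) = u / u ^ α := by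
      rw [Real.rpow_sub hu0, Real.rpow_one]
    rw [h1]
    exact div_le_div_of_nonneg_left hu0.le hua (by linarith)
  have := h1.union h2
  rwa [Ioc_union_Ioi_eq_Ioi zero_le_one] at this

lemma subst (τ : ℝ) (hτ : 0 < τ) :
    ∫ u in Ioi (1:ℝ), τ * u / (u ^ α + τ)
      = τ ^ (2/α) * ∫ v in Ioi (τ ^ (-1/α)), G α v := by
  have hα0 : (0:ℝ) < α := by linarith
  set s : ℝ := τ ^ (1/α) with hs
  have hs0 : 0 < s := Real.rpow_pos_of_pos hτ _
  have ha0 : 0 < τ ^ (-1/α) := Real.rpow_pos_of_pos hτ _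
  have key := integral_comp_mul_left_Ioi (fun u => τ * u / (u ^ α + τ)) (τ ^ (-1/α)) hs0
  have h1 : s * τ ^ (-1/α) = 1 := by
    rw [hs, ← Real.rpow_add hτ, show 1/α + -1/α = 0 by ring, Real.rpow_zero]
  rw [h1] at key
  have h2 : EqOn (fun x : ℝ => τ * (s * x) / ((s * x) ^ α + τ))
      (fun x => s * G α x) (Ioi (τ ^ (-1/α))) := by
    intro x hx
    have hx0 : 0 < x := lt_trans ha0 hx
    have hsx : (s * x) ^ α = τ * x ^ α := by
      rw [Real.mul_rpow hs0.le hx0.le, hs, ← Real.rpow_mul hτ.le,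
        show 1/α * α = 1 by field_simp, Real.rpow_one]
    have hxa : (0:ℝ) < x ^ α := Real.rpow_pos_of_pos hx0 α
    show τ * (s * x) / ((s * x) ^ α + τ) = s * G α x
    rw [hsx]
    unfold G
    rw [show τ * x ^ α + τ = τ * (x ^ α + 1) by ring]
    field_simp
  rw [show (fun x : ℝ => (fun u => τ * u / (u ^ α + τ)) (s * x))
        = fun x : ℝ => τ * (s * x) / ((s * x) ^ α + τ) from rfl,
    setIntegral_congr_fun measurableSet_Ioi h2, integral_const_mul, smul_eq_mul] at key
  have h3 : s * s = τ ^ (2/α) := by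
    rw [hs, ← Real.rpow_add hτ, show 1/α + 1/α = 2/α by ring]
  have := congrArg (fun y => s * y) key
  rw [← mul_assoc, h3, ← mul_assoc, mul_inv_cancel₀ hs0.ne', one_mul] at this
  exact this.symm

lemma tail_close {ε : ℝ} (h0 : 0 < ε) (h1 : ε ≤ 1) :
    |(∫ v in Ioi (0:ℝ), G α v) - ∫ v in Ioi ε, G α v| ≤ ε := by
  have hGi := G_integrable hα
  have hsplit : (∫ v in Ioi (0:ℝ), G α v)
      = (∫ v in Ioc 0 ε, G α v) + ∫ v in Ioi ε, G α v := by
    rw [← setIntegral_union (Ioc_disjoint_Ioi le_rfl) measurableSet_Ioi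
      (hGi.mono_set Ioc_subset_Ioi_self) (hGi.mono_set (Ioi_subset_Ioi h0.le)),
      Ioc_union_Ioi_eq_Ioi h0.le]
  rw [hsplit, add_sub_cancel_right]
  have hb : ‖∫ v in Ioc 0 ε, G α v‖ ≤ 1 * (volume (Ioc (0:ℝ) ε)).toReal := by
    refine norm_setIntegral_le_of_norm_le_const ?_ ?_
    · rw [Real.volume_Ioc]; exact ENNReal.ofReal_lt_top
    · intro x hx
      rw [Real.norm_eq_abs, abs_of_nonneg (G_nonneg hα hx.1.le)]
      exact le_trans (G_le hα hx.1.le) (le_trans hx.2 h1)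
  rw [Real.volume_Ioc, ENNReal.toReal_ofReal (by linarith), one_mul, sub_zero] at hb
  calc |∫ v in Ioc 0 ε, G α v| ≤ ε := hb
  
/-- the limiting constant (half of it) -/
noncomputable def I0 (α : ℝ) : ℝ := ∫ v in Ioi (0:ℝ), G α v

lemma G_pos {v : ℝ} (hv : 0 < v) : 0 < G α v := by
  have : (0:ℝ) ≤ v ^ α := Real.rpow_nonneg hv.le α
  unfold G; positivity

lemma I0_pos : 0 < I0 α := by
  rw [I0, setIntegral_pos_iff_support_of_nonneg_ae ?hae (G_integrable hα)]
  case hae =>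
    filter_upwards [ae_restrict_mem measurableSet_Ioi] with v hv
    exact G_nonneg hα (le_of_lt hv)
  have hsub : Ioi (0:ℝ) ⊆ Function.support (G α) ∩ Ioi 0 :=
    fun v hv => ⟨ne_of_gt (G_pos hα hv), hv⟩
  calc (0 : ENNReal) < volume (Ioi (0:ℝ)) := by rw [Real.volume_Ioi]; exact ENNReal.zero_lt_top
    _ ≤ _ := measure_mono hsub

omit hα in
lemma f_lt {a b u : ℝ} (ha : 0 ≤ a) (hab : a < b) (hu0 : 0 < u) (hx : 0 < u ^ α) :
    a * u / (u ^ α + a) < b * u / (u ^ α + b) := by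
  rw [div_lt_div_iff₀ (by linarith) (by linarith)]
  nlinarith [mul_pos (mul_pos (sub_pos.2 hab) hu0) hx]

lemma integral_lt {a b : ℝ} (ha : 0 ≤ a) (hab : a < b) :
    (∫ u in Ioi (1:ℝ), a * u / (u ^ α + a)) < ∫ u in Ioi (1:ℝ), b * u / (u ^ α + b) := by
  have hb0 : 0 ≤ b := le_trans ha hab.le
  have hia := f_integrable hα a ha
  have hib := f_integrable hα b hb0
  have hint : IntegrableOn (fun u : ℝ => b * u / (u ^ α + b) - a * u / (u ^ α + a))
      (Ioi 1) := hib.sub hia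
  rw [← sub_pos, ← integral_sub hib hia]
  rw [setIntegral_pos_iff_support_of_nonneg_ae ?hae hint]
  case hae =>
    filter_upwards [ae_restrict_mem measurableSet_Ioi] with u hu
    have hu0 : (0:ℝ) < u := lt_trans one_pos hu
    have hx : (0:ℝ) < u ^ α := Real.rpow_pos_of_pos hu0 α
    exact sub_nonneg.2 (f_lt ha hab hu0 hx).le
  have hsub : Ioi (1:ℝ) ⊆
      Function.support (fun u => b * u / (u ^ α + b) - a * u / (u ^ α + a)) ∩ Ioi 1 := by
    intro u hu
    have hu0 : (0:ℝ) < u := lt_trans one_pos hu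
    have hx : (0:ℝ) < u ^ α := Real.rpow_pos_of_pos hu0 α
    exact ⟨ne_of_gt (sub_pos.2 (f_lt ha hab hu0 hx)), hu⟩
  calc (0 : ENNReal) < volume (Ioi (1:ℝ)) := by rw [Real.volume_Ioi]; exact ENNReal.zero_lt_top
    _ ≤ _ := measure_mono hsub

lemma tail_tendsto :
    Tendsto (fun τ : ℝ => ∫ v in Ioi (τ ^ (-1/α)), G α v) atTop (𝓝 (I0 α)) := by
  have hα0 : (0:ℝ) < α := by linarith
  have hdiff : Tendsto (fun τ : ℝ => (∫ v in Ioi (τ ^ (-1/α)), G α v) - I0 α)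
      atTop (𝓝 0) := by
    apply squeeze_zero_norm' (a := fun τ : ℝ => τ ^ (-1/α))
    · filter_upwards [eventually_ge_atTop (1:ℝ)] with τ hτ1
      have hτ0 : (0:ℝ) < τ := lt_of_lt_of_le one_pos hτ1
      have he0 : (0:ℝ) < τ ^ (-1/α) := Real.rpow_pos_of_pos hτ0 _
      have he1 : τ ^ (-1/α) ≤ 1 := by
        apply Real.rpow_le_one_of_one_le_of_nonpos hτ1
        apply div_nonpos_of_nonpos_of_nonneg <;> linarith
      rw [Real.norm_eq_abs, abs_sub_comm]
      exact tail_close hα he0 he1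
    · simpa [neg_div] using tendsto_rpow_neg_atTop (show (0:ℝ) < 1/α by positivity)
  simpa using hdiff.add_const (I0 α)

end Hyp2F1Aux

open Hyp2F1Aux

theorem hyp2F1_monotone_and_asymptotics (α : ℝ) (hα : 2 < α) :
    StrictMonoOn (fun τ : ℝ => hyp2F1 α 1 (-τ)) (Ici 0) ∧
    hyp2F1 α 1 (-(0 : ℝ)) = 1 ∧
    (∃ C : ℝ, 0 < C ∧
      Tendsto (fun τ : ℝ => hyp2F1 α 1 (-τ) / τ ^ (2 / α)) atTop (𝓝 C)) ∧
    StrictAntiOn (fun τ : ℝ => 1 / hyp2F1 α 1 (-τ)) (Ici 0) ∧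
    1 / hyp2F1 α 1 (-(0 : ℝ)) = 1 ∧
    Tendsto (fun τ : ℝ => 1 / hyp2F1 α 1 (-τ)) atTop (𝓝 0) := by
  have hα0 : (0:ℝ) < α := by linarith
  have h2α : (0:ℝ) < 2/α := by positivity
  have hF0 : hyp2F1 α 1 (-(0:ℝ)) = 1 := by
    rw [hyp_eq α 0 le_rfl]
    simp
  have hmono : StrictMonoOn (fun τ : ℝ => hyp2F1 α 1 (-τ)) (Ici 0) := by
    intro a ha b hb hab
    simp only
    rw [hyp_eq α a ha, hyp_eq α b hb]
    have := integral_lt hα (a := a) (b := b) ha hab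
    linarith
  have hFge1 : ∀ τ : ℝ, 0 ≤ τ → 1 ≤ hyp2F1 α 1 (-τ) := by
    intro τ hτ
    rw [hyp_eq α τ hτ]
    have h0 : 0 ≤ ∫ u in Ioi (1:ℝ), τ * u / (u ^ α + τ) :=
      setIntegral_nonneg measurableSet_Ioi fun u hu =>
        f_nonneg hα τ hτ (lt_trans one_pos hu)
    linarith
  have hmain : Tendsto (fun τ : ℝ => hyp2F1 α 1 (-τ) / τ ^ (2/α)) atTop
      (𝓝 (2 * I0 α)) := by
    have h1 : Tendsto (fun τ : ℝ =>
        τ ^ (-(2/α)) + 2 * ∫ v in Ioi (τ ^ (-1/α)), G α v) atTop (𝓝 (0 + 2 * I0 α)) :=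
      (tendsto_rpow_neg_atTop h2α).add ((tail_tendsto hα).const_mul 2)
    rw [zero_add] at h1
    refine Tendsto.congr' ?_ h1
    filter_upwards [eventually_gt_atTop (0:ℝ)] with τ hτ
    rw [hyp_eq α τ hτ.le, subst hα τ hτ]
    have hp : (0:ℝ) < τ ^ (2/α) := Real.rpow_pos_of_pos hτ _
    rw [Real.rpow_neg hτ.le]
    field_simp
  have hanti : StrictAntiOn (fun τ : ℝ => 1 / hyp2F1 α 1 (-τ)) (Ici 0) := by
    intro a ha b hb hab
    have h1 : 0 < hyp2F1 α 1 (-a) := lt_of_lt_of_le one_pos (hFge1 a ha)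
    exact one_div_lt_one_div_of_lt h1 (hmono ha hb hab)
  have hFtop : Tendsto (fun τ : ℝ => hyp2F1 α 1 (-τ)) atTop atTop := by
    have h2 : Tendsto (fun τ : ℝ => hyp2F1 α 1 (-τ) / τ ^ (2/α) * τ ^ (2/α))
        atTop atTop :=
      hmain.pos_mul_atTop (mul_pos two_pos (I0_pos hα)) (tendsto_rpow_atTop h2α)
    refine Tendsto.congr' ?_ h2
    filter_upwards [eventually_gt_atTop (0:ℝ)] with τ hτ
    have hp : (0:ℝ) < τ ^ (2/α) := Real.rpow_pos_of_pos hτ _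
    rw [div_mul_cancel₀ _ hp.ne']
  refine ⟨hmono, hF0, ⟨2 * I0 α, mul_pos two_pos (I0_pos hα), hmain⟩, hanti,
    by rw [hF0]; norm_num, ?_⟩
  simpa [one_div, Pi.inv_def] using hFtop.inv_tendsto_atTop
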